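/- Let λ > 0 and k ≥ 1. Then the ratio k^{1-λ} Γ(k+2λ)/(Γ(2λ) Γ(k+1)) ≤ (Υ_k^{2λ,1}/Γ(2λ)) · k^λ, where Υ_k^{2λ,1} = exp( (2λ-1)/(2k) + 1/(12(k+2λ-1)) + (2λ-1)²/k ). -/

import Mathlib

private lemma gng_poly1 (K u : ℝ) (hK : 1 ≤ K) (hu0 : 0 ≤ u) (hu1 : u ≤ 1) :
    (u / 2 - u ^ 2) * (12 * (K - u)) ≤ 1 * K := by
  rcases le_or_gt u (1/2) with h | h
  · nlinarith [mul_nonneg (by linarith : (0:ℝ) ≤ K) (sq_nonneg (4*u - 1)),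
      mul_nonneg (sq_nonneg u) (by linarith : (0:ℝ) ≤ 1 - 2*u)]
  · nlinarith [mul_nonneg (by linarith : (0:ℝ) ≤ 2*u - 1) (by linarith : (0:ℝ) ≤ K - u),
      mul_nonneg (mul_nonneg (by linarith : (0:ℝ) ≤ 2*u - 1) (by linarith : (0:ℝ) ≤ K - u)) hu0]

private lemma gng_poly2 (K t : ℝ) (hK : 1 ≤ K) (ht0 : 0 ≤ t) (ht1 : t ≤ 1) :
    (t / 2 - t ^ 2) * (12 * (K + t)) ≤ 1 * K := by
  nlinarith [mul_nonneg ht0 (sq_nonneg (4*t - 1)), sq_nonneg (32*t - 9),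
    mul_nonneg (by linarith : (0:ℝ) ≤ K - 1) (sq_nonneg (4*t - 1)),
    (by linarith : (0:ℝ) ≤ K - 1)]

private lemma gng_logGamma_step {x : ℝ} (hx : 0 < x) :
    Real.log (Real.Gamma (x + 1)) - Real.log (Real.Gamma x) = Real.log x := by
  rw [Real.Gamma_add_one hx.ne', Real.log_mul hx.ne' (Real.Gamma_pos_of_pos hx).ne']
  ring

private lemma gng_log_shift {x c : ℝ} (hx : 0 < x) (hc : 0 ≤ c) :
    Real.log (x + c) ≤ Real.log x + c / x := by
  have hxc : (0:ℝ) < x + c := by linarith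
  have h2 : (0:ℝ) < (x + c) / x := by positivity
  have h3 : Real.log ((x + c) / x) = Real.log (x + c) - Real.log x :=
    Real.log_div hxc.ne' hx.ne'
  have h4 : Real.log ((x + c) / x) ≤ (x + c) / x - 1 := Real.log_le_sub_one_of_pos h2
  have h5 : (x + c) / x - 1 = c / x := by field_simp; ring
  linarith

private lemma gng_key (s K : ℝ) (hs : 0 < s) (hK1 : 1 ≤ K) :
    Real.log (Real.Gamma (K + s)) - Real.log (Real.Gamma (K + 1)) ≤
      (s - 1) * Real.log K +
        ((s - 1) / (2 * K) + 1 / (12 * (K + s - 1)) + (s - 1) ^ 2 / K) := by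
  have hKpos : (0:ℝ) < K := by linarith
  have hKs1 : (0:ℝ) < K + s - 1 := by linarith
  have hconv : ConvexOn ℝ (Set.Ioi 0) (Real.log ∘ Real.Gamma) := Real.convexOn_log_Gamma
  set g : ℝ → ℝ := Real.log ∘ Real.Gamma with hg
  have hgdef : ∀ x, g x = Real.log (Real.Gamma x) := fun x => rfl
  have hmemK : K ∈ Set.Ioi (0:ℝ) := hKpos
  have hmemK1 : K + 1 ∈ Set.Ioi (0:ℝ) := by simp only [Set.mem_Ioi]; linarith
  have hmemKs : K + s ∈ Set.Ioi (0:ℝ) := by simp only [Set.mem_Ioi]; linarith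
  rcases lt_trichotomy s 1 with hs1 | hs1 | hs1
  · -- s < 1
    have hsec := hconv.secant_mono hmemK1 hmemK hmemKs
      (by intro h; nlinarith [congrArg id h] : K ≠ K + 1)
      (by intro h; nlinarith [congrArg id h] : K + s ≠ K + 1)
      (by linarith : K ≤ K + s)
    have hstep : g (K + 1) - g K = Real.log K := by
      rw [hgdef, hgdef]; exact gng_logGamma_step hKpos
    have h1 : (g K - g (K + 1)) / (K - (K + 1)) = Real.log K := by
      rw [show K - (K + 1) = -1 by ring, div_neg, div_one]
      linarith
    rw [h1, show (K + s) - (K + 1) = s - 1 by ring] at hsec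
    have hneg : s - 1 < 0 := by linarith
    have hmain : g (K + s) - g (K + 1) ≤ (s - 1) * Real.log K := by
      nlinarith [(le_div_iff_of_neg hneg).mp hsec]
    have hE : (0:ℝ) ≤ (s - 1) / (2 * K) + 1 / (12 * (K + s - 1)) + (s - 1) ^ 2 / K := by
      have hA : (0:ℝ) < 12 * (K + s - 1) := by linarith
      have key : ((1 - s) / 2 - (1 - s) ^ 2) / K ≤ 1 / (12 * (K + s - 1)) := by
        rw [div_le_div_iff₀ hKpos hA]
        have := gng_poly1 K (1 - s) hK1 (by linarith) (by linarith)
        calc ((1 - s) / 2 - (1 - s) ^ 2) * (12 * (K + s - 1))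
            = ((1 - s) / 2 - (1 - s) ^ 2) * (12 * (K - (1 - s))) := by ring
          _ ≤ 1 * K := this
      have hEq : (s - 1) / (2 * K) + (s - 1) ^ 2 / K
          = -(((1 - s) / 2 - (1 - s) ^ 2) / K) := by
        field_simp; ring
      linarith
    have hgg := hmain
    rw [hgdef, hgdef] at hgg
    linarith
  · -- s = 1
    subst hs1
    have hpos : (0:ℝ) < 1 / (12 * (K + 1 - 1)) := by
      apply div_pos one_pos; linarith
    have heq : ((1:ℝ) - 1) * Real.log K + (((1:ℝ) - 1) / (2 * K) + 1 / (12 * (K + 1 - 1))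
        + ((1:ℝ) - 1) ^ 2 / K) = 1 / (12 * (K + 1 - 1)) := by ring
    rw [heq, sub_self]
    linarith
  · rcases le_or_gt s 2 with hs2 | hs2
    · -- 1 < s ≤ 2
      have hmemK2 : K + 2 ∈ Set.Ioi (0:ℝ) := by simp only [Set.mem_Ioi]; linarith
      have hsec := hconv.secant_mono hmemK1 hmemKs hmemK2
        (by intro h; nlinarith [congrArg id h] : K + s ≠ K + 1)
        (by intro h; nlinarith [congrArg id h] : K + 2 ≠ K + 1)
        (by linarith : K + s ≤ K + 2)
      have hstep : g (K + 2) - g (K + 1) = Real.log (K + 1) := by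
        rw [hgdef, hgdef]
        have := gng_logGamma_step (show (0:ℝ) < K + 1 by linarith)
        rw [show K + 1 + 1 = K + 2 by ring] at this
        exact this
      have h1 : (g (K + 2) - g (K + 1)) / ((K + 2) - (K + 1)) = Real.log (K + 1) := by
        rw [show (K + 2) - (K + 1) = 1 by ring, div_one]; exact hstep
      rw [h1, show (K + s) - (K + 1) = s - 1 by ring] at hsec
      have ht : 0 < s - 1 := by linarith
      have hmain : g (K + s) - g (K + 1) ≤ (s - 1) * Real.log (K + 1) := by
        nlinarith [(div_le_iff₀ ht).mp hsec]
      have hlog : Real.log (K + 1) ≤ Real.log K + 1 / K := gng_log_shift hKpos zero_le_one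
      have hA : (0:ℝ) < 12 * (K + s - 1) := by linarith
      have key : ((s - 1) / 2 - (s - 1) ^ 2) / K ≤ 1 / (12 * (K + s - 1)) := by
        rw [div_le_div_iff₀ hKpos hA]
        have := gng_poly2 K (s - 1) hK1 (by linarith) (by linarith)
        calc ((s - 1) / 2 - (s - 1) ^ 2) * (12 * (K + s - 1))
            = ((s - 1) / 2 - (s - 1) ^ 2) * (12 * (K + (s - 1))) := by ring
          _ ≤ 1 * K := this
      have hchain : g (K + s) - g (K + 1) ≤ (s - 1) * Real.log K + (s - 1) / K := by
        calc g (K + s) - g (K + 1) ≤ (s - 1) * Real.log (K + 1) := hmain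
          _ ≤ (s - 1) * (Real.log K + 1 / K) :=
              mul_le_mul_of_nonneg_left hlog (by linarith)
          _ = (s - 1) * Real.log K + (s - 1) / K := by rw [mul_add, mul_one_div]
      have hsplit : (s - 1) / K = (s - 1) / (2 * K) + ((s - 1) / 2 - (s - 1) ^ 2) / K
          + (s - 1) ^ 2 / K := by
        field_simp; ring
      have hgg := hchain
      rw [hgdef, hgdef] at hgg
      rw [hsplit] at hgg
      linarith
    · -- s > 2
      have hmemKs1 : K + s - 1 ∈ Set.Ioi (0:ℝ) := by simp only [Set.mem_Ioi]; linarith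
      have hsec := hconv.secant_mono hmemKs hmemK1 hmemKs1
        (by intro h; nlinarith [congrArg id h] : K + 1 ≠ K + s)
        (by intro h; nlinarith [congrArg id h] : K + s - 1 ≠ K + s)
        (by linarith : K + 1 ≤ K + s - 1)
      have hstep : g (K + s) - g (K + s - 1) = Real.log (K + s - 1) := by
        rw [hgdef, hgdef]
        have := gng_logGamma_step hKs1
        rw [show K + s - 1 + 1 = K + s by ring] at this
        exact this
      have h1 : (g (K + s - 1) - g (K + s)) / ((K + s - 1) - (K + s)) = Real.log (K + s - 1) := by
        rw [show (K + s - 1) - (K + s) = -1 by ring, div_neg, div_one]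
        linarith
      rw [h1, show (K + 1) - (K + s) = -(s - 1) by ring] at hsec
      have hneg : -(s - 1) < 0 := by linarith
      have hmain : g (K + s) - g (K + 1) ≤ (s - 1) * Real.log (K + s - 1) := by
        nlinarith [(div_le_iff_of_neg hneg).mp hsec]
      have hlog : Real.log (K + s - 1) ≤ Real.log K + (s - 1) / K := by
        have := gng_log_shift hKpos (show (0:ℝ) ≤ s - 1 by linarith)
        rw [show K + (s - 1) = K + s - 1 by ring] at this
        exact this
      have h2 : (0:ℝ) < (s - 1) / (2 * K) := by
        apply div_pos (by linarith) (by linarith)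
      have h3 : (0:ℝ) < 1 / (12 * (K + s - 1)) := by
        apply div_pos one_pos (by linarith)
      have hchain : g (K + s) - g (K + 1)
          ≤ (s - 1) * Real.log K + (s - 1) ^ 2 / K := by
        calc g (K + s) - g (K + 1) ≤ (s - 1) * Real.log (K + s - 1) := hmain
          _ ≤ (s - 1) * (Real.log K + (s - 1) / K) :=
              mul_le_mul_of_nonneg_left hlog (by linarith)
          _ = (s - 1) * Real.log K + (s - 1) ^ 2 / K := by
              rw [mul_add]; congr 1; field_simp
      have hgg := hchain
      rw [hgdef, hgdef] at hgg
      linarith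

theorem gegenbauer_normalization_growth (lam : ℝ) (hlam : 0 < lam) (k : ℕ) (hk : 1 ≤ k) :
    (k : ℝ) ^ ((1:ℝ) - lam) * Real.Gamma ((k : ℝ) + 2 * lam) /
        (Real.Gamma (2 * lam) * Real.Gamma ((k : ℝ) + 1))
      ≤ Real.exp ((2 * lam - 1) / (2 * k) + 1 / (12 * ((k : ℝ) + 2 * lam - 1))
          + (2 * lam - 1) ^ 2 / k) / Real.Gamma (2 * lam) * (k : ℝ) ^ lam := by
  have hK1 : (1:ℝ) ≤ (k : ℝ) := by exact_mod_cast hk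
  set K : ℝ := (k : ℝ) with hK
  have hKpos : (0:ℝ) < K := by linarith
  have hs : (0:ℝ) < 2 * lam := by linarith
  have hGs : 0 < Real.Gamma (2 * lam) := Real.Gamma_pos_of_pos hs
  have hGk1 : 0 < Real.Gamma (K + 1) := Real.Gamma_pos_of_pos (by linarith)
  have hGks : 0 < Real.Gamma (K + 2 * lam) := Real.Gamma_pos_of_pos (by linarith)
  set E : ℝ := (2 * lam - 1) / (2 * K) + 1 / (12 * (K + 2 * lam - 1)) + (2 * lam - 1) ^ 2 / K
    with hE
  have key := gng_key (2 * lam) K hs hK1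
  have hbound : Real.Gamma (K + 2 * lam) ≤ Real.exp E * K ^ (2 * lam - 1) * Real.Gamma (K + 1) := by
    have h1 : Real.Gamma (K + 2 * lam) =
        Real.exp (Real.log (Real.Gamma (K + 2 * lam))) := (Real.exp_log hGks).symm
    have h2 : Real.exp E * K ^ (2 * lam - 1) * Real.Gamma (K + 1) =
        Real.exp (E + Real.log K * (2 * lam - 1) + Real.log (Real.Gamma (K + 1))) := by
      rw [Real.rpow_def_of_pos hKpos, ← Real.exp_log hGk1, ← Real.exp_add, ← Real.exp_add,
        Real.log_exp]
    rw [h1, h2]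
    apply Real.exp_le_exp.mpr
    rw [hE]
    nlinarith [key]
  have hrw : K ^ ((1:ℝ) - lam) * K ^ (2 * lam - 1) = K ^ lam := by
    rw [← Real.rpow_add hKpos]; ring_nf
  rw [div_le_iff₀ (by positivity : (0:ℝ) < Real.Gamma (2 * lam) * Real.Gamma (K + 1))]
  have hKpow : (0:ℝ) < K ^ ((1:ℝ) - lam) := Real.rpow_pos_of_pos hKpos _
  calc K ^ ((1:ℝ) - lam) * Real.Gamma (K + 2 * lam)
      ≤ K ^ ((1:ℝ) - lam) * (Real.exp E * K ^ (2 * lam - 1) * Real.Gamma (K + 1)) :=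
        mul_le_mul_of_nonneg_left hbound hKpow.le
    _ = Real.exp E / Real.Gamma (2 * lam) * K ^ lam *
        (Real.Gamma (2 * lam) * Real.Gamma (K + 1)) := by
        rw [← hrw]; field_simp
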